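/- arXiv:1007.3015 — 2 statements merged into one kernel-verified Lean document; each statement's English description precedes it below -/
import Mathlib

section
/- With q_{ij} = a^h_i a^h_j + 2 a^x_i a^y_j + 2 a^x_j a^y_i and c_{klm} the 3×3 determinant with rows (a^h_k, a^x_k, a^y_k), (a^h_l, a^x_l, a^y_l), (a^h_m, a^x_m, a^y_m), the identity c_{ijk} c_{lmn} + (1/4) det [[q_{il}, q_{im}, q_{in}], [q_{jl}, q_{jm}, q_{jn}], [q_{kl}, q_{km}, q_{kn}]] = 0 holds in the polynomial ring ℂ[a^h_i, a^x_i, a^y_i : i ≥ 0]. -/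
open MvPolynomial
open MvPolynomial

/-- The indeterminate `a^ξ_i`, where `ξ ∈ {h,x,y}` is encoded as `0 = h`, `1 = x`,
`2 = y`, in the polynomial ring `ℂ[a^h_i, a^x_i, a^y_i : i ≥ 0]`. -/
noncomputable def aVar (ξ : Fin 3) (i : ℕ) : MvPolynomial (ℕ × Fin 3) ℂ :=
  X (i, ξ)

/-- The quadratic invariant `q_{ij} = a^h_i a^h_j + 2 a^x_i a^y_j + 2 a^x_j a^y_i`. -/
noncomputable def qInv (i j : ℕ) : MvPolynomial (ℕ × Fin 3) ℂ :=
  aVar 0 i * aVar 0 j + 2 * aVar 1 i * aVar 2 j + 2 * aVar 1 j * aVar 2 i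

/-- The cubic invariant `c_{klm}`, the determinant with rows
`(a^h_k, a^x_k, a^y_k)`, `(a^h_l, a^x_l, a^y_l)`, `(a^h_m, a^x_m, a^y_m)`
(defined for arbitrary index triples; it is antisymmetric). -/
noncomputable def cInv (k l m : ℕ) : MvPolynomial (ℕ × Fin 3) ℂ :=
  Matrix.det !![aVar 0 k, aVar 1 k, aVar 2 k;
                aVar 0 l, aVar 1 l, aVar 2 l;
                aVar 0 m, aVar 1 m, aVar 2 m]


lemma det3_of' {R : Type*} [CommRing R] (a b c d e f g h i : R) :
    Matrix.det !![a,b,c;d,e,f;g,h,i]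
      = a*e*i - a*f*h - b*d*i + b*f*g + c*d*h - c*e*g := by
  simp [Matrix.det_fin_three]

set_option maxHeartbeats 1000000 in
lemma qdet_eq (i j k l m n : ℕ) :
    Matrix.det !![qInv i l, qInv i m, qInv i n;
                  qInv j l, qInv j m, qInv j n;
                  qInv k l, qInv k m, qInv k n] = -4 * (cInv i j k * cInv l m n) := by
  simp only [cInv, qInv, aVar, det3_of']
  ring

/-- The second type of relation in Weyl's theorem:
`c_{ijk} c_{lmn} + (1/4) det [[q_{il}, q_{im}, q_{in}], [q_{jl}, q_{jm}, q_{jn}],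
[q_{kl}, q_{km}, q_{kn}]] = 0`. -/
theorem stmt_3 (i j k l m n : ℕ) :
    cInv i j k * cInv l m n
      + C (1/4 : ℂ) * Matrix.det !![qInv i l, qInv i m, qInv i n;
                                    qInv j l, qInv j m, qInv j n;
                                    qInv k l, qInv k m, qInv k n] = 0 := by
  have h4 : (C (1/4 : ℂ) : MvPolynomial (ℕ × Fin 3) ℂ) * 4 = 1 := by
    rw [show (4 : MvPolynomial (ℕ × Fin 3) ℂ) = C (4:ℂ) from (map_ofNat C 4).symm, ← C_mul]
    norm_num
  rw [qdet_eq]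
  linear_combination (-(cInv i j k * cInv l m n)) * h4
end

section
/- Let D be the derivation of R_∞ = ℂ[x_j^{(i)} : 1 ≤ j ≤ n, i ≥ 0] with D(x_j^{(i)}) = x_j^{(i+1)}, and let the Lie algebra g[t] act on R_∞ by the jet action (ξ t^r)(x_j^{(i)}) = (i!/(i−r)!) (ξ·x_j)^{(i−r)}. Then for every g-invariant polynomial f ∈ ℂ[x_1^{(0)},...,x_n^{(0)}] (i.e., ξ(f) = 0 for all ξ ∈ g), all derivatives D^k(f), k ≥ 0, are invariant under g[t]: (ξ t^r)(D^k f) = 0 for all ξ ∈ g and r ≥ 0. -/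
open MvPolynomial

attribute [local instance 100] LieRing.ofAssociativeRing

/-- The jet action: given a Lie algebra `g` acting on the coordinate space `V*`
(with dual basis identified with `Fin n → ℂ`) via `α`, the derivation of the ring
`ℂ[x_j^{(i)} : 1 ≤ j ≤ n, i ≥ 0]` of functions on the infinite jet space of `V`
attached to `ξ t^r ∈ g[t]`; on generators
`(ξ t^r)(x_j^{(i)}) = (i!/(i−r)!) (ξ·x_j)^{(i−r)}` for `r ≤ i`, and `0` for `r > i`. -/
noncomputable def jetDer {g : Type*} [LieRing g] [LieAlgebra ℂ g] (n : ℕ)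
    (α : g →ₗ⁅ℂ⁆ Module.End ℂ (Fin n → ℂ)) (ξ : g) (r : ℕ) :
    Derivation ℂ (MvPolynomial (Fin n × ℕ) ℂ) (MvPolynomial (Fin n × ℕ) ℂ) :=
  MvPolynomial.mkDerivation ℂ fun v =>
    (v.2.descFactorial r : ℂ) •
      ∑ k : Fin n, C (α ξ (Pi.single v.1 1) k) * X (k, v.2 - r)

/-- The derivation `D` of `R_∞ = ℂ[x_j^{(i)}]` with `D(x_j^{(i)}) = x_j^{(i+1)}`. -/
noncomputable def jetD (n : ℕ) :
    Derivation ℂ (MvPolynomial (Fin n × ℕ) ℂ) (MvPolynomial (Fin n × ℕ) ℂ) :=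
  MvPolynomial.mkDerivation ℂ fun v => X (v.1, v.2 + 1)

/-- Pascal-type identity for descending factorials. -/
lemma descFactorial_succ_succ (i s : ℕ) :
    (i + 1).descFactorial (s + 1) =
      i.descFactorial (s + 1) + (s + 1) * i.descFactorial s := by
  rw [Nat.succ_descFactorial_succ, Nat.descFactorial_succ]
  rcases le_or_gt s i with h | h
  · rw [← add_mul]
    congr 1
    omega
  · rw [Nat.descFactorial_eq_zero_iff_lt.mpr h]
    ring

/-- The commutator identity `⁅ξ tʳ, D⁆ = r ξ tʳ⁻¹`. -/
lemma jet_comm {g : Type*} [LieRing g] [LieAlgebra ℂ g] (n : ℕ)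
    (α : g →ₗ⁅ℂ⁆ Module.End ℂ (Fin n → ℂ)) (ξ : g) (r : ℕ) :
    ⁅jetDer n α ξ r, jetD n⁆ = (r : ℂ) • jetDer n α ξ (r - 1) := by
  apply MvPolynomial.derivation_ext
  rintro ⟨j, i⟩
  have hξ : ∀ (r' : ℕ) (v : Fin n × ℕ), jetDer n α ξ r' (X v) =
      (v.2.descFactorial r' : ℂ) •
        ∑ k : Fin n, C (α ξ (Pi.single v.1 1) k) * X (k, v.2 - r') :=
    fun r' v => mkDerivation_X ℂ _ v
  have hDX : ∀ v : Fin n × ℕ, jetD n (X v) = X (v.1, v.2 + 1) :=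
    fun v => mkDerivation_X ℂ _ v
  have hD : ∀ (c : ℂ) (m : ℕ),
      jetD n (c • ∑ k : Fin n, C (α ξ (Pi.single j 1) k) * X (k, m)) =
        c • ∑ k : Fin n, C (α ξ (Pi.single j 1) k) * X (k, m + 1) := by
    intro c m
    rw [Derivation.map_smul, map_sum]
    refine congrArg _ (Finset.sum_congr rfl fun k _ => ?_)
    rw [Derivation.leibniz, derivation_C, smul_zero, add_zero, hDX, smul_eq_mul]
  rw [Derivation.commutator_apply, Derivation.smul_apply, hDX, hξ, hξ, hξ, hD]
  simp only
  cases r with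
  | zero => simp
  | succ s =>
    rcases le_or_gt (s + 1) i with h | h
    · have e1 : i + 1 - (s + 1) = i - s := by omega
      have e2 : i - (s + 1) + 1 = i - s := by omega
      have e3 : i - (s + 1 - 1) = i - s := by omega
      rw [e1, e2, e3, smul_smul, ← sub_smul]
      congr 1
      rw [descFactorial_succ_succ]
      push_cast
      ring
    · rcases Nat.lt_or_ge i s with h' | h'
      · have c1 : (i + 1).descFactorial (s + 1) = 0 :=
          Nat.descFactorial_eq_zero_iff_lt.mpr (by omega)
        have c2 : i.descFactorial (s + 1) = 0 :=
          Nat.descFactorial_eq_zero_iff_lt.mpr (by omega)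
        have c3 : i.descFactorial s = 0 :=
          Nat.descFactorial_eq_zero_iff_lt.mpr (by omega)
        rw [c1, c2]
        have c3' : i.descFactorial (s + 1 - 1) = 0 := by simpa using c3
        rw [c3']
        simp
      · have hi : i = s := by omega
        have c2 : i.descFactorial (s + 1) = 0 :=
          Nat.descFactorial_eq_zero_iff_lt.mpr (by omega)
        have e1 : i + 1 - (s + 1) = 0 := by omega
        have e3 : i - (s + 1 - 1) = 0 := by omega
        rw [c2, e1, e3]
        simp only [Nat.cast_zero, zero_smul, sub_zero]
        rw [Nat.succ_descFactorial_succ, hi, smul_smul]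
        push_cast
        ring_nf

lemma jet_base {g : Type*} [LieRing g] [LieAlgebra ℂ g] (n : ℕ)
    (α : g →ₗ⁅ℂ⁆ Module.End ℂ (Fin n → ℂ)) (ξ : g) (s : ℕ)
    (f : MvPolynomial (Fin n) ℂ) :
    jetDer n α ξ (s + 1) (rename (fun j => (j, 0)) f) = 0 := by
  induction f using MvPolynomial.induction_on with
  | C a => simp
  | add p q hp hq => simp [hp, hq]
  | mul_X p j hp =>
    rw [map_mul, Derivation.leibniz, hp]
    simp [jetDer, mkDerivation_X]

/-- If `f` is a `g`-invariant polynomial in the weight-zero variables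
`x_1^{(0)},…,x_n^{(0)}`, then all its derivatives `D^k(f)` are invariant under the
jet action of `g[t]`: `(ξ t^r)(D^k f) = 0` for all `ξ ∈ g`, `r ≥ 0`, `k ≥ 0`. -/
theorem stmt_8 {g : Type*} [LieRing g] [LieAlgebra ℂ g] (n : ℕ)
    (α : g →ₗ⁅ℂ⁆ Module.End ℂ (Fin n → ℂ)) (f : MvPolynomial (Fin n) ℂ)
    (hf : ∀ ξ : g, jetDer n α ξ 0 (rename (fun j => (j, 0)) f) = 0) :
    ∀ (k : ℕ) (ξ : g) (r : ℕ),
      jetDer n α ξ r ((⇑(jetD n))^[k] (rename (fun j => (j, 0)) f)) = 0 := by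
  intro k
  induction k with
  | zero =>
    intro ξ r
    cases r with
    | zero => exact hf ξ
    | succ s => exact jet_base n α ξ s f
  | succ k ih =>
    intro ξ r
    rw [Function.iterate_succ_apply']
    have h2 := DFunLike.congr_fun (jet_comm n α ξ r)
      ((⇑(jetD n))^[k] (rename (fun j => (j, 0)) f))
    rw [Derivation.commutator_apply, Derivation.smul_apply, ih ξ r, ih ξ (r - 1),
      map_zero, sub_zero, smul_zero] at h2
    exact h2
end
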